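/- (Closed-form credibility factors under the AR(1) state-space model.) Let T ≥ 2 be an integer, ρ ∈ (−1,1) with ρ ≠ 0, σ > 0, and let λ_1,…,λ_T, λ_{T+1} > 0 and q_1,…,q_T > 0 be real numbers. Set ξ_t = σ²(1−ρ²)λ_t²/q_t, and let u_t, v_t be the associated recursive sequences. Let Σ_T be the T×T matrix with diagonal entries [Σ_T]_{t,t} = q_t + σ²λ_t² and off-diagonal entries [Σ_T]_{s,t} = σ²λ_sλ_t ρ^{|s−t|} for s ≠ t, and let c ∈ ℝ^T be the vector with c_t = σ²λ_tλ_{T+1}ρ^{T+1−t}. Then Σ_T is invertible and the credibility factors α̂ = Σ_T^{−1}c are given explicitly by α̂_t = ρ(1−ρ²)σ²λ_{T+1}·v_T·u_t·λ_t/q_t for t = 1,…,T; consequently the standardized credibility factors α̂*_t = λ_t·α̂_t equal ρ(1−ρ²)σ²λ_{T+1}·v_T·u_t·λ_t²/q_t. -/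

import Mathlib

open Matrix

/-- Covariance matrix of the observations in the AR(1) state-space model:
diagonal entries `q_t + σ²λ_t²`, off-diagonal entries `σ²λ_sλ_tρ^{|s−t|}`
(one-based sequences `lam`, `q`). -/
noncomputable def covMat (T : ℕ) (ρ σ : ℝ) (lam q : ℕ → ℝ) :
    Matrix (Fin T) (Fin T) ℝ :=
  Matrix.of fun s t =>
    if s = t then q ((s : ℕ) + 1) + σ ^ 2 * (lam ((s : ℕ) + 1)) ^ 2
    else σ ^ 2 * lam ((s : ℕ) + 1) * lam ((t : ℕ) + 1) *
      ρ ^ (Int.natAbs ((s : ℤ) - (t : ℤ)))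

/-- closed-form credibility factors under the AR(1) state-space
model.  With `c_t = σ²λ_tλ_{T+1}ρ^{T+1−t}`, the covariance matrix `Σ_T` is
invertible and the credibility factors `α̂ = Σ_T⁻¹c` satisfy
`α̂_t = ρ(1−ρ²)σ²λ_{T+1} v_T u_t λ_t / q_t`; consequently the standardized
factors `α̂*_t = λ_t α̂_t` equal `ρ(1−ρ²)σ²λ_{T+1} v_T u_t λ_t² / q_t`. -/
theorem stmt9 (T : ℕ) (hT : 2 ≤ T) (ρ : ℝ) (hρ1 : -1 < ρ) (hρ2 : ρ < 1)
    (hρ0 : ρ ≠ 0) (σ : ℝ) (hσ : 0 < σ) (lam q : ℕ → ℝ)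
    (hlam : ∀ t, 1 ≤ t → t ≤ T + 1 → 0 < lam t)
    (hq : ∀ t, 1 ≤ t → t ≤ T → 0 < q t)
    (ξ d v δ u : ℕ → ℝ)
    (hξ : ∀ t, ξ t = σ ^ 2 * (1 - ρ ^ 2) * (lam t) ^ 2 / q t)
    (hdT : d T = 1 + ξ T)
    (hd : ∀ t, 2 ≤ t → t ≤ T - 1 → d t = 1 + ρ ^ 2 + ξ t - ρ ^ 2 / d (t + 1))
    (hd1 : d 1 = 1 + ξ 1 - ρ ^ 2 / d 2)
    (hv1 : v 1 = 1 / d 1)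
    (hv : ∀ t, 2 ≤ t → t ≤ T → v t = (ρ / d t) * v (t - 1))
    (hδ1 : δ 1 = 1 + ξ 1)
    (hδ : ∀ t, 2 ≤ t → t ≤ T - 1 → δ t = 1 + ρ ^ 2 + ξ t - ρ ^ 2 / δ (t - 1))
    (hδT : δ T = 1 + ξ T - ρ ^ 2 / δ (T - 1))
    (huT : u T = 1 / (δ T * v T))
    (hu : ∀ t, 1 ≤ t → t ≤ T - 1 → u t = (ρ / δ t) * u (t + 1)) :
    IsUnit (covMat T ρ σ lam q) ∧
    (∀ t : Fin T,
      (covMat T ρ σ lam q)⁻¹.mulVec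
          (fun s : Fin T =>
            σ ^ 2 * lam ((s : ℕ) + 1) * lam (T + 1) * ρ ^ (T - (s : ℕ))) t =
        ρ * (1 - ρ ^ 2) * σ ^ 2 * lam (T + 1) * v T * u ((t : ℕ) + 1) *
          lam ((t : ℕ) + 1) / q ((t : ℕ) + 1)) ∧
    (∀ t : Fin T,
      lam ((t : ℕ) + 1) *
          (covMat T ρ σ lam q)⁻¹.mulVec
            (fun s : Fin T =>
              σ ^ 2 * lam ((s : ℕ) + 1) * lam (T + 1) * ρ ^ (T - (s : ℕ))) t =
        ρ * (1 - ρ ^ 2) * σ ^ 2 * lam (T + 1) * v T * u ((t : ℕ) + 1) *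
          (lam ((t : ℕ) + 1)) ^ 2 / q ((t : ℕ) + 1)) := by
  -- basic positivity facts
  have h1ρ : (0:ℝ) < 1 - ρ ^ 2 := by nlinarith
  have hρsq_ne : ρ ^ 2 ≠ 1 := by nlinarith
  have hξpos : ∀ t, 1 ≤ t → t ≤ T → 0 < ξ t := by
    intro t h1 h2
    rw [hξ]
    have := hlam t h1 (by omega)
    have := hq t h1 h2
    positivity
  have hδge : ∀ t, 1 ≤ t → t ≤ T - 1 → 1 ≤ δ t := by
    intro t h1
    induction t, h1 using Nat.le_induction with
    | base =>
      intro _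
      rw [hδ1]
      have := hξpos 1 le_rfl (by omega)
      linarith
    | succ n hn ih =>
      intro h
      have h1δ : 1 ≤ δ n := ih (by omega)
      rw [hδ (n+1) (by omega) h]
      simp only [Nat.add_sub_cancel]
      have h2 : ρ ^ 2 / δ n ≤ ρ ^ 2 := div_le_self (sq_nonneg ρ) h1δ
      have h3 := hξpos (n+1) (by omega) (by omega)
      linarith
  have hδne : ∀ t, 1 ≤ t → t ≤ T - 1 → δ t ≠ 0 := fun t h1 h2 => by
    have := hδge t h1 h2; linarith
  have hδTpos : 0 < δ T := by
    rw [hδT]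
    have h1 : 1 ≤ δ (T-1) := hδge (T-1) (by omega) le_rfl
    have h2 : ρ ^ 2 / δ (T-1) ≤ ρ ^ 2 := div_le_self (sq_nonneg ρ) h1
    have h3 := hξpos T (by omega) le_rfl
    linarith
  have hdge : ∀ k t, t + k = T → 2 ≤ t → 1 ≤ d t := by
    intro k
    induction k with
    | zero =>
      intro t ht _
      have heq : t = T := by omega
      rw [heq, hdT]
      have := hξpos T (by omega) le_rfl
      linarith
    | succ k ih =>
      intro t ht h2
      have h1d : 1 ≤ d (t+1) := ih (t+1) (by omega) (by omega)
      rw [hd t h2 (by omega)]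
      have hle : ρ ^ 2 / d (t+1) ≤ ρ ^ 2 := div_le_self (sq_nonneg ρ) h1d
      have h3 := hξpos t (by omega) (by omega)
      linarith
  have hd1pos : 0 < d 1 := by
    rw [hd1]
    have h1d : 1 ≤ d 2 := hdge (T-2) 2 (by omega) le_rfl
    have hle : ρ ^ 2 / d 2 ≤ ρ ^ 2 := div_le_self (sq_nonneg ρ) h1d
    have h3 := hξpos 1 le_rfl (by omega)
    linarith
  have hvne : ∀ t, 1 ≤ t → t ≤ T → v t ≠ 0 := by
    intro t h1
    induction t, h1 using Nat.le_induction with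
    | base =>
      intro _
      rw [hv1]
      positivity
    | succ n hn ih =>
      intro h
      have hvn : v n ≠ 0 := ih (by omega)
      have hrw := hv (n+1) (by omega) h
      simp only [Nat.add_sub_cancel] at hrw
      rw [hrw]
      have hdn : d (n+1) ≠ 0 := by
        have : 1 ≤ d (n+1) := hdge (T - (n+1)) (n+1) (by omega) (by omega)
        linarith
      exact mul_ne_zero (div_ne_zero hρ0 hdn) hvn
  have hvT : v T ≠ 0 := hvne T (by omega) le_rfl
  -- the sequences g, W, Z
  set g : ℕ → ℝ := fun s => ξ s * u s with hg
  set W : ℕ → ℝ := fun t => ∑ k ∈ Finset.range t, ρ ^ (t - 1 - k) * g (k+1) with hWdef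
  set Z : ℕ → ℝ := fun t => ∑ k ∈ Finset.range (T - t + 1), ρ ^ k * g (t + k) with hZdef
  have hWrec : ∀ n, 1 ≤ n → W (n+1) = ρ * W n + g (n+1) := by
    intro n hn
    simp only [hWdef]
    rw [Finset.sum_range_succ]
    have h1 : ∀ k ∈ Finset.range n,
        ρ ^ (n + 1 - 1 - k) * g (k+1) = ρ * (ρ ^ (n - 1 - k) * g (k+1)) := by
      intro k hk
      rw [Finset.mem_range] at hk
      rw [show n + 1 - 1 - k = (n - 1 - k) + 1 by omega, pow_succ]
      ring
    rw [Finset.sum_congr rfl h1, ← Finset.mul_sum]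
    simp only [Nat.add_sub_cancel, Nat.sub_self, pow_zero, one_mul]
  have hW : ∀ t, 1 ≤ t → t ≤ T - 1 → W t = (δ t - 1) * u t := by
    intro t h1
    induction t, h1 using Nat.le_induction with
    | base =>
      intro _
      simp only [hWdef, Finset.sum_range_one, Nat.sub_self, pow_zero, one_mul, hg]
      rw [hδ1]
      ring
    | succ n hn ih =>
      intro h
      rw [hWrec n hn, ih (by omega), hu n hn (by omega), hδ (n+1) (by omega) h]
      simp only [Nat.add_sub_cancel, hg]
      have hδn := hδne n hn (by omega)
      field_simp
      ring
  have hWT : W T = (δ T + ρ ^ 2 - 1) * u T := by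
    have h1 : W T = ρ * W (T-1) + g T := by
      have h2 := hWrec (T-1) (by omega)
      rwa [show T-1+1 = T by omega] at h2
    have h3 := hu (T-1) (by omega) le_rfl
    rw [show T-1+1 = T by omega] at h3
    rw [h1, hW (T-1) (by omega) le_rfl, h3, hδT]
    have hδn := hδne (T-1) (by omega) le_rfl
    simp only [hg]
    field_simp
    ring
  have hZrec : ∀ t, 1 ≤ t → t ≤ T - 1 → Z t = g t + ρ * Z (t+1) := by
    intro t h1 h2
    simp only [hZdef]
    rw [show T - t + 1 = (T - t - 1 + 1) + 1 by omega, Finset.sum_range_succ']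
    rw [show T - (t+1) + 1 = T - t - 1 + 1 by omega]
    have hcg : ∀ k ∈ Finset.range (T - t - 1 + 1),
        ρ ^ (k+1) * g (t + (k+1)) = ρ * (ρ ^ k * g (t + 1 + k)) := by
      intro k _
      rw [show t + (k+1) = t + 1 + k by omega, pow_succ]
      ring
    rw [Finset.sum_congr rfl hcg, ← Finset.mul_sum]
    simp only [pow_zero, one_mul, Nat.add_zero]
    ring
  have hZ : ∀ k t, t + k = T → 2 ≤ t →
      Z t = ρ ^ (T - t) / v T - u t + ρ * u (t-1) := by
    intro k
    induction k with
    | zero =>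
      intro t ht h2
      have heq : t = T := by omega
      rw [heq]
      simp only [hZdef, Nat.sub_self, pow_zero]
      rw [zero_add, Finset.sum_range_one]
      simp only [pow_zero, one_mul, Nat.add_zero, hg]
      have h3 := hu (T-1) (by omega) le_rfl
      rw [show T-1+1 = T by omega] at h3
      have e1 : 1 / v T = δ T * u T := by
        rw [huT]
        field_simp
      rw [h3, e1]
      linear_combination (-u T) * hδT
    | succ k ih =>
      intro t ht h2
      have hZt := hZrec t (by omega) (by omega)
      have hZt1 := ih (t+1) (by omega) (by omega)
      rw [hZt, hZt1]
      simp only [Nat.add_sub_cancel]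
      have h3 : ρ * u (t+1) = δ t * u t := by
        rw [hu t (by omega) (by omega)]
        have := hδne t (by omega) (by omega)
        field_simp
      have h4 : u (t-1) = ρ / δ (t-1) * u t := by
        have := hu (t-1) (by omega) (by omega)
        rwa [show t-1+1 = t by omega] at this
      have h5 := hδ t h2 (by omega)
      have hδt1 := hδne (t-1) (by omega) (by omega)
      have hpow : ρ * ρ ^ (T - (t+1)) = ρ ^ (T - t) := by
        rw [show T - t = (T - (t+1)) + 1 by omega, pow_succ]
        ring
      rw [h4]
      simp only [hg]
      linear_combination (1 / v T) * hpow - h3 - u t * h5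
  have hstar : ∀ t0, t0 < T →
      (1 - ρ ^ 2) * u (t0+1) +
        (∑ k ∈ Finset.range T, ρ ^ (((t0:ℤ) - (k:ℤ)).natAbs) * g (k+1)) =
      ρ ^ (T - 1 - t0) / v T := by
    intro t0 hlt
    have hsplit : (∑ k ∈ Finset.range T, ρ ^ (((t0:ℤ) - (k:ℤ)).natAbs) * g (k+1)) =
        (∑ k ∈ Finset.range (t0+1), ρ ^ (((t0:ℤ) - (k:ℤ)).natAbs) * g (k+1)) +
        (∑ k ∈ Finset.Ico (t0+1) T, ρ ^ (((t0:ℤ) - (k:ℤ)).natAbs) * g (k+1)) := by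
      simp only [Finset.range_eq_Ico]
      exact (Finset.sum_Ico_consecutive _ (Nat.zero_le (t0+1)) (by omega)).symm
    have hfirst : (∑ k ∈ Finset.range (t0+1), ρ ^ (((t0:ℤ) - (k:ℤ)).natAbs) * g (k+1)) =
        W (t0+1) := by
      simp only [hWdef]
      refine Finset.sum_congr rfl fun k hk => ?_
      rw [Finset.mem_range] at hk
      rw [show (((t0:ℤ) - (k:ℤ)).natAbs) = t0 + 1 - 1 - k by omega]
    have hsecond : (∑ k ∈ Finset.Ico (t0+1) T, ρ ^ (((t0:ℤ) - (k:ℤ)).natAbs) * g (k+1)) =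
        ∑ j ∈ Finset.range (T - (t0+1)), ρ ^ (j+1) * g (t0+2+j) := by
      rw [Finset.sum_Ico_eq_sum_range]
      refine Finset.sum_congr rfl fun j hj => ?_
      rw [Finset.mem_range] at hj
      rw [show (((t0:ℤ) - ((t0+1+j : ℕ):ℤ)).natAbs) = j + 1 by omega,
        show t0+1+j+1 = t0+2+j by omega]
    rcases eq_or_lt_of_le (show t0 + 1 ≤ T by omega) with hTt | hTt
    · -- t0 + 1 = T
      rw [hsplit, hfirst, hsecond, hTt]
      simp only [Nat.sub_self, Finset.range_zero, Finset.sum_empty, add_zero]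
      rw [hWT, show T - 1 - t0 = 0 by omega, pow_zero]
      have e1 : 1 / v T = δ T * u T := by
        rw [huT]; field_simp
      linear_combination -e1
    · -- t0 + 1 ≤ T - 1
      have hZeq : ∑ j ∈ Finset.range (T - (t0+1)), ρ ^ (j+1) * g (t0+2+j) =
          ρ * Z (t0+2) := by
        simp only [hZdef]
        rw [show T - (t0+2) + 1 = T - (t0+1) by omega, Finset.mul_sum]
        refine Finset.sum_congr rfl fun j hj => ?_
        rw [pow_succ, show t0+2+j = t0+2+j from rfl]
        ring
      rw [hsplit, hfirst, hsecond, hZeq]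
      have hZv := hZ (T - (t0+2)) (t0+2) (by omega) (by omega)
      rw [show t0+2-1 = t0+1 by omega] at hZv
      rw [hZv, hW (t0+1) (by omega) (by omega)]
      have h3 : ρ * u (t0+2) = δ (t0+1) * u (t0+1) := by
        have h := hu (t0+1) (by omega) (by omega)
        rw [show t0+1+1 = t0+2 by omega] at h
        rw [h]
        have := hδne (t0+1) (by omega) (by omega)
        field_simp
      have hpow : ρ * ρ ^ (T - (t0+2)) = ρ ^ (T - 1 - t0) := by
        rw [show T - 1 - t0 = (T - (t0+2)) + 1 by omega, pow_succ]
        ring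
      linear_combination (1 / v T) * hpow - h3
  -- positive definiteness
  set ent : ℕ → ℕ → ℝ := fun t k =>
    if k = 0 then σ * lam (t+1) * ρ ^ t
    else if k ≤ t then σ * lam (t+1) * ρ ^ (t - k) * Real.sqrt (1 - ρ^2)
    else 0 with hent
  set A : Matrix (Fin T) (Fin T) ℝ :=
    Matrix.of (fun t k : Fin T => ent (t:ℕ) (k:ℕ)) with hA
  have hAA : ∀ s t : Fin T, (s:ℕ) ≤ (t:ℕ) →
      (A * Aᵀ) s t = σ^2 * lam ((s:ℕ)+1) * lam ((t:ℕ)+1) * ρ^((t:ℕ)-(s:ℕ)) := by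
    intro s t hst
    rw [Matrix.mul_apply]
    simp only [Matrix.transpose_apply, hA, Matrix.of_apply]
    rw [Fin.sum_univ_eq_sum_range (fun k => ent (s:ℕ) k * ent (t:ℕ) k) T]
    rw [← Finset.sum_subset (Finset.range_subset_range.mpr (show (s:ℕ)+1 ≤ T by omega))
      (fun k _ hk => by
        rw [Finset.mem_range, not_lt] at hk
        have h0 : ent (s:ℕ) k = 0 := by
          simp only [hent]
          rw [if_neg (by omega), if_neg (by omega)]
        rw [h0, zero_mul])]
    rw [Finset.sum_range_succ']
    have hzero : ent (s:ℕ) 0 * ent (t:ℕ) 0 =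
        σ^2 * lam ((s:ℕ)+1) * lam ((t:ℕ)+1) * (ρ^(s:ℕ) * ρ^(t:ℕ)) := by
      simp only [hent, if_pos rfl]
      ring
    have hterm : ∀ k ∈ Finset.range (s:ℕ), ent (s:ℕ) (k+1) * ent (t:ℕ) (k+1) =
        (σ^2 * lam ((s:ℕ)+1) * lam ((t:ℕ)+1) * (1-ρ^2)) *
          (ρ^((t:ℕ)-(s:ℕ)) * (ρ^2)^((s:ℕ)-1-k)) := by
      intro k hk
      rw [Finset.mem_range] at hk
      simp only [hent]
      rw [if_neg (by omega), if_pos (by omega), if_neg (by omega), if_pos (by omega)]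
      have hsqrt : Real.sqrt (1-ρ^2) * Real.sqrt (1-ρ^2) = 1 - ρ^2 :=
        Real.mul_self_sqrt h1ρ.le
      have hexp : ρ^((s:ℕ)-(k+1)) * ρ^((t:ℕ)-(k+1)) =
          ρ^((t:ℕ)-(s:ℕ)) * (ρ^2)^((s:ℕ)-1-k) := by
        rw [← pow_add, ← pow_mul, ← pow_add]
        congr 1
        omega
      calc σ * lam ((s:ℕ)+1) * ρ^((s:ℕ)-(k+1)) * Real.sqrt (1-ρ^2) *
            (σ * lam ((t:ℕ)+1) * ρ^((t:ℕ)-(k+1)) * Real.sqrt (1-ρ^2))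
          = (σ * σ) * lam ((s:ℕ)+1) * lam ((t:ℕ)+1) *
              (Real.sqrt (1-ρ^2) * Real.sqrt (1-ρ^2)) *
              (ρ^((s:ℕ)-(k+1)) * ρ^((t:ℕ)-(k+1))) := by ring
        _ = _ := by rw [hsqrt, hexp]; ring
    rw [Finset.sum_congr rfl hterm, hzero, ← Finset.mul_sum]
    have hreflect : ∑ k ∈ Finset.range (s:ℕ), ρ^((t:ℕ)-(s:ℕ)) * (ρ^2)^((s:ℕ)-1-k) =
        ρ^((t:ℕ)-(s:ℕ)) * (((ρ^2)^(s:ℕ) - 1) / (ρ^2 - 1)) := by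
      rw [← Finset.mul_sum]
      congr 1
      rw [Finset.sum_range_reflect (fun j => (ρ^2)^j) (s:ℕ)]
      exact geom_sum_eq hρsq_ne (s:ℕ)
    rw [hreflect]
    have hkey : ρ^((t:ℕ)-(s:ℕ)) * (ρ^2)^(s:ℕ) = ρ^(s:ℕ) * ρ^(t:ℕ) := by
      rw [← pow_mul, ← pow_add, ← pow_add]
      congr 1
      omega
    have hne : ρ^2 - 1 ≠ 0 := sub_ne_zero.mpr hρsq_ne
    rw [← hkey]
    field_simp
    ring
  have hsymm : ∀ s t : Fin T, (A * Aᵀ) s t = (A * Aᵀ) t s := by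
    intro s t
    rw [Matrix.mul_apply, Matrix.mul_apply]
    exact Finset.sum_congr rfl fun k _ => by
      rw [Matrix.transpose_apply, Matrix.transpose_apply, mul_comm]
  have hfact : covMat T ρ σ lam q =
      Matrix.diagonal (fun i : Fin T => q ((i:ℕ)+1)) + A * Aᵀ := by
    ext s t
    by_cases hst : s = t
    · subst hst
      simp only [covMat, Matrix.of_apply, eq_self_iff_true, if_true, Matrix.add_apply,
        Matrix.diagonal_apply_eq]
      rw [hAA s s le_rfl, Nat.sub_self, pow_zero]
      ring
    · simp only [covMat, Matrix.of_apply, if_neg hst, Matrix.add_apply,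
        Matrix.diagonal_apply_ne _ hst, zero_add]
      rcases le_or_gt (s:ℕ) (t:ℕ) with h | h
      · rw [hAA s t h, show (((s:ℕ):ℤ)-((t:ℕ):ℤ)).natAbs = (t:ℕ)-(s:ℕ) by omega]
      · rw [hsymm, hAA t s h.le,
          show (((s:ℕ):ℤ)-((t:ℕ):ℤ)).natAbs = (s:ℕ)-(t:ℕ) by omega]
        ring
  have hPD : (covMat T ρ σ lam q).PosDef := by
    rw [hfact]
    refine (Matrix.PosDef.diagonal fun i => hq _ (by omega) (by omega)).add_posSemidef ?_
    have h : Aᵀ = Aᴴ := by ext i j; simp [Matrix.conjTranspose_apply]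
    rw [h]
    exact Matrix.posSemidef_self_mul_conjTranspose A
  have hUnit : IsUnit (covMat T ρ σ lam q) := hPD.isUnit
  have hdet : IsUnit (covMat T ρ σ lam q).det := (Matrix.isUnit_iff_isUnit_det _).mp hUnit
  -- the candidate solution
  set α : Fin T → ℝ := fun s =>
    ρ * (1 - ρ ^ 2) * σ ^ 2 * lam (T + 1) * v T * u ((s : ℕ) + 1) *
      lam ((s : ℕ) + 1) / q ((s : ℕ) + 1) with hα
  have hmv : (covMat T ρ σ lam q).mulVec α =
      (fun s : Fin T => σ ^ 2 * lam ((s : ℕ) + 1) * lam (T + 1) * ρ ^ (T - (s : ℕ))) := by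
    have hga : ∀ s : Fin T, lam ((s:ℕ)+1) * α s = (ρ * lam (T+1) * v T) * g ((s:ℕ)+1) := by
      intro s
      have hqs : q ((s:ℕ)+1) ≠ 0 := (hq _ (by omega) (by omega)).ne'
      simp only [hα, hg, hξ]
      field_simp
    funext t
    simp only [Matrix.mulVec, dotProduct]
    have hsplit : ∀ s : Fin T, covMat T ρ σ lam q t s * α s =
        (if t = s then q ((t:ℕ)+1) * α t else 0) +
          (σ^2 * lam ((t:ℕ)+1) * (ρ * lam (T+1) * v T)) *
            (ρ^((((t:ℕ):ℤ)-((s:ℕ):ℤ)).natAbs) * g ((s:ℕ)+1)) := by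
      intro s
      by_cases h : t = s
      · subst h
        simp only [covMat, Matrix.of_apply, eq_self_iff_true, if_true, Int.sub_self,
          Int.natAbs_zero, pow_zero, one_mul]
        linear_combination (σ^2 * lam ((t:ℕ)+1)) * hga t
      · simp only [covMat, Matrix.of_apply, if_neg h]
        linear_combination (σ^2 * lam ((t:ℕ)+1) * ρ^((((t:ℕ):ℤ)-((s:ℕ):ℤ)).natAbs)) * hga s
    rw [Finset.sum_congr rfl (fun s _ => hsplit s), Finset.sum_add_distrib,
      Finset.sum_ite_eq, if_pos (Finset.mem_univ t), ← Finset.mul_sum]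
    rw [Fin.sum_univ_eq_sum_range
      (fun k => ρ^((((t:ℕ):ℤ)-((k:ℕ):ℤ)).natAbs) * g (k+1)) T]
    have hS : (∑ k ∈ Finset.range T, ρ^((((t:ℕ):ℤ)-((k:ℕ):ℤ)).natAbs) * g (k+1)) =
        ρ^(T-1-(t:ℕ))/v T - (1-ρ^2)*u ((t:ℕ)+1) := by
      linarith [hstar (t:ℕ) t.isLt]
    rw [hS]
    have hqne : q ((t:ℕ)+1) ≠ 0 := (hq _ (by omega) (by omega)).ne'
    rw [show T - (t:ℕ) = (T-1-(t:ℕ))+1 by omega, pow_succ]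
    simp only [hα]
    field_simp
    ring
  have hsol : (covMat T ρ σ lam q)⁻¹.mulVec
      (fun s : Fin T => σ ^ 2 * lam ((s : ℕ) + 1) * lam (T + 1) * ρ ^ (T - (s : ℕ))) = α := by
    rw [← hmv, Matrix.mulVec_mulVec, Matrix.nonsing_inv_mul _ hdet, Matrix.one_mulVec]
  refine ⟨hUnit, fun t => by rw [hsol], fun t => ?_⟩
  rw [hsol]
  have hqne : q ((t:ℕ)+1) ≠ 0 := (hq ((t:ℕ)+1) (by omega) (by omega)).ne'
  simp only [hα]
  field_simp
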